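/- arXiv:dg-ga/9603010 — 5 statements merged into one kernel-verified Lean document; each statement's English description precedes it below -/
import Mathlib

section
/- For every real number b, ∫₀^∞ r e^{−r²/2} cos(br) dr = 1 − b·e^{−b²/2} ∫₀^b e^{t²/2} dt. -/
open MeasureTheory Real Set Filter Metric

noncomputable def Jf (b : ℝ) : ℝ := ∫ r in Set.Ioi (0:ℝ), Real.exp (-r^2/2) * Real.sin (b*r)
noncomputable def Df (b : ℝ) : ℝ := Real.exp (-b^2/2) * ∫ t in (0:ℝ)..b, Real.exp (t^2/2)
noncomputable def Gf (b : ℝ) : ℝ := ∫ r in Set.Ioi (0:ℝ), r * Real.exp (-r^2/2) * Real.cos (b*r)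

lemma exp_eq : (fun r : ℝ => Real.exp (-r^2/2)) = fun r => Real.exp (-(1/2) * r^2) := by
  ext r; ring_nf

lemma intExp : Integrable (fun r : ℝ => Real.exp (-r^2/2)) := by
  rw [exp_eq]; exact integrable_exp_neg_mul_sq (by norm_num)

lemma intXExp : Integrable (fun r : ℝ => r * Real.exp (-r^2/2)) := by
  have h : (fun r : ℝ => r * Real.exp (-r^2/2)) = fun r => r * Real.exp (-(1/2) * r^2) := by
    ext r; ring_nf
  rw [h]; exact integrable_mul_exp_neg_mul_sq (by norm_num)

lemma contExp : Continuous (fun r : ℝ => Real.exp (-r^2/2)) := by fun_prop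

lemma intJ (b : ℝ) : IntegrableOn (fun r : ℝ => Real.exp (-r^2/2) * Real.sin (b*r)) (Set.Ioi 0) := by
  refine Integrable.mono' intExp.integrableOn ?_ ?_
  · exact ((contExp.mul (Real.continuous_sin.comp (continuous_const.mul continuous_id)))).aestronglyMeasurable.restrict
  · filter_upwards with r
    rw [norm_mul, Real.norm_eq_abs, Real.norm_eq_abs, abs_of_nonneg (Real.exp_pos _).le]
    calc Real.exp (-r^2/2) * |Real.sin (b*r)| ≤ Real.exp (-r^2/2) * 1 := by
          exact mul_le_mul_of_nonneg_left (Real.abs_sin_le_one _) (Real.exp_pos _).le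
      _ = Real.exp (-r^2/2) := mul_one _

lemma intG (b : ℝ) : IntegrableOn (fun r : ℝ => r * Real.exp (-r^2/2) * Real.cos (b*r)) (Set.Ioi 0) := by
  refine Integrable.mono' intXExp.abs.integrableOn ?_ ?_
  · exact (((continuous_id.mul contExp).mul (Real.continuous_cos.comp (continuous_const.mul continuous_id)))).aestronglyMeasurable.restrict
  · filter_upwards with r
    rw [norm_mul, Real.norm_eq_abs, Real.norm_eq_abs]
    calc |r * Real.exp (-r^2/2)| * |Real.cos (b*r)| ≤ |r * Real.exp (-r^2/2)| * 1 :=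
          mul_le_mul_of_nonneg_left (Real.abs_cos_le_one _) (abs_nonneg _)
      _ = |r * Real.exp (-r^2/2)| := mul_one _

lemma hExpDeriv (r : ℝ) : HasDerivAt (fun r : ℝ => Real.exp (-r^2/2)) (Real.exp (-r^2/2) * (-r)) r := by
  have h1 : HasDerivAt (fun r : ℝ => -r^2/2) (-r) r := by
    have := ((hasDerivAt_pow 2 r).neg.div_const 2)
    refine this.congr_deriv ?_
    norm_num; ring
  exact h1.exp

/-- Integration by parts identity: `Gf b = 1 - b * Jf b`. -/
lemma ibp (b : ℝ) : Gf b + b * Jf b = 1 := by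
  have key : ∫ r in Set.Ioi (0:ℝ),
      (r * Real.exp (-r^2/2) * Real.cos (b*r) + b * (Real.exp (-r^2/2) * Real.sin (b*r))) = 1 := by
    have := integral_Ioi_of_hasDerivAt_of_tendsto'
      (a := (0:ℝ)) (m := (0:ℝ))
      (f := fun r => -(Real.exp (-r^2/2) * Real.cos (b*r)))
      (f' := fun r => r * Real.exp (-r^2/2) * Real.cos (b*r) + b * (Real.exp (-r^2/2) * Real.sin (b*r)))
      ?_ ?_ ?_
    · simpa using this
    · intro r _
      have hcos : HasDerivAt (fun r : ℝ => Real.cos (b*r)) (-Real.sin (b*r) * b) r := by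
        have := ((hasDerivAt_id r).const_mul b).cos
        simpa using this
      have := ((hExpDeriv r).mul hcos).neg
      refine this.congr_deriv ?_
      ring
    · exact ((intG b).add ((intJ b).const_mul b))
    · have h0 : Tendsto (fun r : ℝ => Real.exp (-r^2/2)) atTop (nhds 0) := by
        have h2 : Tendsto (fun r : ℝ => r^2/2) atTop atTop :=
          (tendsto_pow_atTop (two_ne_zero)).atTop_div_const (by norm_num)
        have h3 : Tendsto (fun r : ℝ => -r^2/2) atTop atBot := by
          simpa [neg_div] using tendsto_neg_atBot_iff.mpr h2
        exact Real.tendsto_exp_atBot.comp h3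
      exact squeeze_zero_norm (fun r => by
        rw [norm_neg, norm_mul, Real.norm_eq_abs, Real.norm_eq_abs,
          abs_of_nonneg (Real.exp_pos _).le]
        calc Real.exp (-r^2/2) * |Real.cos (b*r)| ≤ Real.exp (-r^2/2) * 1 :=
              mul_le_mul_of_nonneg_left (Real.abs_cos_le_one _) (Real.exp_pos _).le
          _ = Real.exp (-r^2/2) := mul_one _) h0
  rw [MeasureTheory.integral_add (intG b) ((intJ b).const_mul b),
    MeasureTheory.integral_const_mul] at key
  exact key

lemma hJderiv (b : ℝ) : HasDerivAt Jf (Gf b) b := by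
  have h := hasDerivAt_integral_of_dominated_loc_of_deriv_le
    (F := fun x (r : ℝ) => Real.exp (-r^2/2) * Real.sin (x*r))
    (F' := fun x (r : ℝ) => r * Real.exp (-r^2/2) * Real.cos (x*r))
    (bound := fun r => r * Real.exp (-r^2/2))
    (μ := volume.restrict (Set.Ioi (0:ℝ))) (x₀ := b)
    (Metric.ball_mem_nhds b one_pos)
    (Filter.Eventually.of_forall fun x =>
      ((contExp.mul (Real.continuous_sin.comp (continuous_const.mul continuous_id)))).aestronglyMeasurable.restrict)
    (intJ b)
    (((continuous_id.mul contExp).mul (Real.continuous_cos.comp (continuous_const.mul continuous_id))).aestronglyMeasurable.restrict)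
    ?_ intXExp.integrableOn ?_
  · have := h.2
    exact this
  · rw [ae_restrict_iff' measurableSet_Ioi]
    filter_upwards with r hr
    intro x _
    rw [norm_mul, norm_mul, Real.norm_eq_abs, Real.norm_eq_abs, Real.norm_eq_abs,
      abs_of_nonneg (le_of_lt hr), abs_of_nonneg (Real.exp_pos _).le]
    calc r * Real.exp (-r^2/2) * |Real.cos (x*r)| ≤ r * Real.exp (-r^2/2) * 1 :=
        mul_le_mul_of_nonneg_left (Real.abs_cos_le_one _) (mul_nonneg (le_of_lt hr) (Real.exp_pos _).le)
      _ = r * Real.exp (-r^2/2) := mul_one _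
  · filter_upwards with r
    intro x _
    have hd : HasDerivAt (fun x : ℝ => Real.exp (-r^2/2) * Real.sin (x*r))
        (Real.exp (-r^2/2) * (Real.cos (x*r) * r)) x := by
      have := (((hasDerivAt_id x).mul_const r).sin).const_mul (Real.exp (-r^2/2))
      simpa using this
    refine hd.congr_deriv ?_
    ring

lemma hDderiv (b : ℝ) : HasDerivAt Df (1 - b * Df b) b := by
  have hE : HasDerivAt (fun x : ℝ => ∫ t in (0:ℝ)..x, Real.exp (t^2/2)) (Real.exp (b^2/2)) b :=
    (Continuous.integral_hasStrictDerivAt (by fun_prop) 0 b).hasDerivAt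
  have h2 : HasDerivAt Df
      (Real.exp (-b^2/2) * (-b) * (∫ t in (0:ℝ)..b, Real.exp (t^2/2))
        + Real.exp (-b^2/2) * Real.exp (b^2/2)) b := (hExpDeriv b).mul hE
  have key : Real.exp (-b^2/2) * Real.exp (b^2/2) = 1 := by
    rw [← Real.exp_add, show -b^2/2 + b^2/2 = 0 by ring, Real.exp_zero]
  convert h2 using 1
  rw [key]
  unfold Df
  ring

lemma JeqD (b : ℝ) : Jf b = Df b := by
  have hderiv : ∀ x : ℝ, HasDerivAt (fun y => Real.exp (y^2/2) * (Jf y - Df y)) 0 x := by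
    intro x
    have he : HasDerivAt (fun y : ℝ => Real.exp (y^2/2)) (Real.exp (x^2/2) * x) x := by
      have h1 : HasDerivAt (fun y : ℝ => y^2/2) x x := by
        have := (hasDerivAt_pow 2 x).div_const 2
        refine this.congr_deriv ?_; norm_num
      exact h1.exp
    have hJ : HasDerivAt Jf (1 - x * Jf x) x := by
      have h := hJderiv x
      have h2 : Gf x = 1 - x * Jf x := by have := ibp x; linarith
      rwa [h2] at h
    have := he.mul (hJ.sub (hDderiv x))
    refine this.congr_deriv ?_
    simp only [Pi.sub_apply]; ring
  have hconst := is_const_of_deriv_eq_zero (f := fun y => Real.exp (y^2/2) * (Jf y - Df y))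
    (fun y => (hderiv y).differentiableAt) (fun y => (hderiv y).deriv) b 0
  have h0 : Jf 0 = 0 := by simp [Jf]
  have hD0 : Df 0 = 0 := by simp [Df]
  have hz : Real.exp (b^2/2) * (Jf b - Df b) = 0 := by
    simpa [h0, hD0] using hconst
  rcases mul_eq_zero.mp hz with h | h
  · exact absurd h (Real.exp_ne_zero _)
  · exact sub_eq_zero.mp h

/-- For every real `b`, `∫₀^∞ r e^{−r²/2} cos(br) dr = 1 − b·e^{−b²/2} ∫₀^b e^{t²/2} dt`. -/
theorem stmt_2 (b : ℝ) :
    ∫ r in Set.Ioi (0 : ℝ), r * Real.exp (-r ^ 2 / 2) * Real.cos (b * r)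
      = 1 - b * Real.exp (-b ^ 2 / 2) * ∫ t in (0 : ℝ)..b, Real.exp (t ^ 2 / 2) := by
  have h1 : Gf b = 1 - b * Jf b := by have := ibp b; linarith
  have h2 : (∫ r in Set.Ioi (0:ℝ), r * Real.exp (-r ^ 2 / 2) * Real.cos (b * r)) = Gf b := rfl
  rw [h2, h1, JeqD b]
  unfold Df
  ring
end

section
/- For every real number b with |b| ≤ 1, ∫₀^∞ r e^{−r²/2} cos(br) dr ≥ 1/4. -/
open MeasureTheory Real Set

/-- If `f 0 = 0` and `f` has nonnegative derivative everywhere with `f'` the derivative,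
then `f x ≥ 0` for `x ≥ 0`. -/
lemma aux_nonneg {f f' : ℝ → ℝ} (hd : ∀ x, HasDerivAt f (f' x) x) (h0 : f 0 = 0)
    (hf' : ∀ x, 0 ≤ x → 0 ≤ f' x) {x : ℝ} (hx : 0 ≤ x) : 0 ≤ f x := by
  have hmono : MonotoneOn f (Set.Ici 0) := by
    apply monotoneOn_of_deriv_nonneg (convex_Ici 0)
    · exact fun y _ => ((hd y).differentiableAt).continuousAt.continuousWithinAt
    · exact fun y _ => ((hd y).differentiableAt).differentiableWithinAt
    · intro y hy
      rw [(hd y).deriv]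
      exact hf' y (le_of_lt (by simpa using hy))
  have := hmono (Set.self_mem_Ici) hx hx
  rwa [h0] at this

lemma sin_ge_cubic {x : ℝ} (hx : 0 ≤ x) : x - x ^ 3 / 6 ≤ Real.sin x := by
  have := aux_nonneg (f := fun x => Real.sin x - x + x ^ 3 / 6)
    (f' := fun x => Real.cos x - 1 + x ^ 2 / 2) ?_ (by norm_num) ?_ hx
  · linarith
  · intro y
    have h1 := ((Real.hasDerivAt_sin y).sub (hasDerivAt_id y)).add ((hasDerivAt_pow 3 y).div_const 6)
    refine h1.congr_deriv ?_; push_cast; ring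
  · intro y _; have := Real.one_sub_sq_div_two_le_cos (x := y); linarith

lemma cos_le_quartic {x : ℝ} (hx : 0 ≤ x) : Real.cos x ≤ 1 - x ^ 2 / 2 + x ^ 4 / 24 := by
  have := aux_nonneg (f := fun x => 1 - x ^ 2 / 2 + x ^ 4 / 24 - Real.cos x)
    (f' := fun x => -x + x ^ 3 / 6 + Real.sin x) ?_ (by norm_num) ?_ hx
  · linarith
  · intro y
    have h1 := (((hasDerivAt_const y (1:ℝ)).sub ((hasDerivAt_pow 2 y).div_const 2)).add
      ((hasDerivAt_pow 4 y).div_const 24)).sub (Real.hasDerivAt_cos y)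
    refine h1.congr_deriv ?_; push_cast; ring
  · intro y hy; have := sin_ge_cubic hy; linarith

lemma sin_le_quintic {x : ℝ} (hx : 0 ≤ x) : Real.sin x ≤ x - x ^ 3 / 6 + x ^ 5 / 120 := by
  have := aux_nonneg (f := fun x => x - x ^ 3 / 6 + x ^ 5 / 120 - Real.sin x)
    (f' := fun x => 1 - x ^ 2 / 2 + x ^ 4 / 24 - Real.cos x) ?_ (by norm_num) ?_ hx
  · linarith
  · intro y
    have h1 := (((hasDerivAt_id y).sub ((hasDerivAt_pow 3 y).div_const 6)).add
      ((hasDerivAt_pow 5 y).div_const 120)).sub (Real.hasDerivAt_sin y)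
    refine h1.congr_deriv ?_; push_cast; ring
  · intro y hy; have := cos_le_quartic hy; linarith

lemma cos_ge_sextic_nonneg {x : ℝ} (hx : 0 ≤ x) :
    1 - x ^ 2 / 2 + x ^ 4 / 24 - x ^ 6 / 720 ≤ Real.cos x := by
  have := aux_nonneg (f := fun x => Real.cos x - (1 - x ^ 2 / 2 + x ^ 4 / 24 - x ^ 6 / 720))
    (f' := fun x => x - x ^ 3 / 6 + x ^ 5 / 120 - Real.sin x) ?_ (by norm_num) ?_ hx
  · linarith
  · intro y
    have h1 := (Real.hasDerivAt_cos y).sub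
      ((((hasDerivAt_const y (1:ℝ)).sub ((hasDerivAt_pow 2 y).div_const 2)).add
      ((hasDerivAt_pow 4 y).div_const 24)).sub ((hasDerivAt_pow 6 y).div_const 720))
    refine h1.congr_deriv ?_; push_cast; ring
  · intro y hy; have := sin_le_quintic hy; linarith

lemma cos_ge_sextic (x : ℝ) : 1 - x ^ 2 / 2 + x ^ 4 / 24 - x ^ 6 / 720 ≤ Real.cos x := by
  rcases le_total 0 x with hx | hx
  · exact cos_ge_sextic_nonneg hx
  · have h := cos_ge_sextic_nonneg (neg_nonneg.mpr hx)
    rw [Real.cos_neg] at h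
    convert h using 2 <;> ring

lemma integrableOn_poly_gauss (n : ℕ) :
    IntegrableOn (fun r : ℝ => r ^ n * Real.exp (-r ^ 2 / 2)) (Set.Ioi 0) := by
  have h := integrableOn_rpow_mul_exp_neg_mul_sq (b := 1/2) (by norm_num) (s := (n : ℝ))
    (lt_of_lt_of_le neg_one_lt_zero (Nat.cast_nonneg n))
  apply h.congr_fun ?_ measurableSet_Ioi
  intro x hx
  simp only [Real.rpow_natCast]
  ring_nf

lemma gauss_poly_integral (b : ℝ) :
    ∫ r in Set.Ioi (0 : ℝ), r * Real.exp (-r ^ 2 / 2) *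
      (1 - (b*r) ^ 2 / 2 + (b*r) ^ 4 / 24 - (b*r) ^ 6 / 720)
      = 1 - b ^ 2 + b ^ 4 / 3 - b ^ 6 / 15 := by
  set c0 : ℝ := 1 - b ^ 2 + b ^ 4 / 3 - b ^ 6 / 15 with hc0
  set c1 : ℝ := -b ^ 2 / 2 + b ^ 4 / 6 - b ^ 6 / 30 with hc1
  set c2 : ℝ := b ^ 4 / 24 - b ^ 6 / 120 with hc2
  set c3 : ℝ := -b ^ 6 / 720 with hc3
  set F : ℝ → ℝ := fun r => -(c0 + c1 * r ^ 2 + c2 * r ^ 4 + c3 * r ^ 6) * Real.exp (-r ^ 2 / 2)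
    with hF
  set g : ℝ → ℝ := fun r => r * Real.exp (-r ^ 2 / 2) *
      (1 - (b*r) ^ 2 / 2 + (b*r) ^ 4 / 24 - (b*r) ^ 6 / 720) with hg
  have hderiv : ∀ r : ℝ, HasDerivAt F (g r) r := by
    intro r
    have hE : HasDerivAt (fun r : ℝ => -r ^ 2 / 2) (-r) r := by
      have := ((hasDerivAt_pow 2 r).neg).div_const 2
      refine this.congr_deriv ?_; push_cast; ring
    have hexp := hE.exp
    have hp : HasDerivAt (fun r : ℝ => -(c0 + c1 * r ^ 2 + c2 * r ^ 4 + c3 * r ^ 6))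
        (-(c1 * (2 * r) + c2 * (4 * r ^ 3) + c3 * (6 * r ^ 5))) r := by
      have := ((((hasDerivAt_const r c0).add ((hasDerivAt_pow 2 r).const_mul c1)).add
        ((hasDerivAt_pow 4 r).const_mul c2)).add
        ((hasDerivAt_pow 6 r).const_mul c3)).neg
      refine this.congr_deriv ?_
      push_cast; ring
    have := hp.mul hexp
    refine this.congr_deriv ?_
    simp only [hg, hc0, hc1, hc2, hc3]
    ring
  have hint : IntegrableOn g (Set.Ioi 0) := by
    have h1 := integrableOn_poly_gauss 1
    have h3 := integrableOn_poly_gauss 3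
    have h5 := integrableOn_poly_gauss 5
    have h7 := integrableOn_poly_gauss 7
    have : IntegrableOn (fun r : ℝ =>
        (r ^ 1 * Real.exp (-r ^ 2 / 2)) + (-(b ^ 2 / 2)) * (r ^ 3 * Real.exp (-r ^ 2 / 2))
        + ((b ^ 4 / 24) * (r ^ 5 * Real.exp (-r ^ 2 / 2))
        + (-(b ^ 6 / 720)) * (r ^ 7 * Real.exp (-r ^ 2 / 2)))) (Set.Ioi 0) :=
      (h1.add (h3.const_mul _)).add ((h5.const_mul _).add (h7.const_mul _))
    apply this.congr_fun ?_ measurableSet_Ioi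
    intro x _
    simp only [hg]
    ring
  have htop : Filter.Tendsto F Filter.atTop (nhds 0) := by
    have hU : Filter.Tendsto (fun u : ℝ =>
        -(c0 + 2 * c1 * u + 4 * c2 * u ^ 2 + 8 * c3 * u ^ 3) * Real.exp (-u))
        Filter.atTop (nhds 0) := by
      have h := fun k : ℕ => tendsto_pow_mul_exp_neg_atTop_nhds_zero k
      have hsum := (((h 0).const_mul (-c0)).add ((h 1).const_mul (-(2*c1)))).add
        (((h 2).const_mul (-(4*c2))).add ((h 3).const_mul (-(8*c3))))
      have heq : (fun u : ℝ =>
          -c0 * (u ^ 0 * Real.exp (-u)) + -(2*c1) * (u ^ 1 * Real.exp (-u))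
          + (-(4*c2) * (u ^ 2 * Real.exp (-u)) + -(8*c3) * (u ^ 3 * Real.exp (-u))))
          = fun u : ℝ => -(c0 + 2 * c1 * u + 4 * c2 * u ^ 2 + 8 * c3 * u ^ 3) * Real.exp (-u) := by
        funext u; ring
      rw [heq] at hsum
      simpa using hsum
    have hsq : Filter.Tendsto (fun r : ℝ => r ^ 2 / 2) Filter.atTop Filter.atTop :=
      (Filter.tendsto_pow_atTop (two_ne_zero)).atTop_div_const (by norm_num)
    have := hU.comp hsq
    apply this.congr
    intro r
    simp only [Function.comp, hF]
    rw [show -(r ^ 2 / 2) = -r ^ 2 / 2 by ring]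
    ring
  have := MeasureTheory.integral_Ioi_of_hasDerivAt_of_tendsto'
    (f := F) (f' := g) (a := 0) (fun x _ => hderiv x) hint htop
  rw [hg] at this
  rw [this]
  simp [hF, hc0]

/-- For every real `b` with `|b| ≤ 1`, `∫₀^∞ r e^{−r²/2} cos(br) dr ≥ 1/4`. -/
theorem stmt_3 (b : ℝ) (hb : |b| ≤ 1) :
    (1 : ℝ) / 4 ≤ ∫ r in Set.Ioi (0 : ℝ), r * Real.exp (-r ^ 2 / 2) * Real.cos (b * r) := by
  have hb2 : b ^ 2 ≤ 1 := by
    have := pow_le_one₀ (abs_nonneg b) hb (n := 2)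
    rwa [sq_abs] at this
  have hg : IntegrableOn (fun r : ℝ => r * Real.exp (-r ^ 2 / 2) *
      (1 - (b*r) ^ 2 / 2 + (b*r) ^ 4 / 24 - (b*r) ^ 6 / 720)) (Set.Ioi 0) := by
    have h1 := integrableOn_poly_gauss 1
    have h3 := integrableOn_poly_gauss 3
    have h5 := integrableOn_poly_gauss 5
    have h7 := integrableOn_poly_gauss 7
    have : IntegrableOn (fun r : ℝ =>
        (r ^ 1 * Real.exp (-r ^ 2 / 2)) + (-(b ^ 2 / 2)) * (r ^ 3 * Real.exp (-r ^ 2 / 2))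
        + ((b ^ 4 / 24) * (r ^ 5 * Real.exp (-r ^ 2 / 2))
        + (-(b ^ 6 / 720)) * (r ^ 7 * Real.exp (-r ^ 2 / 2)))) (Set.Ioi 0) :=
      (h1.add (h3.const_mul _)).add ((h5.const_mul _).add (h7.const_mul _))
    apply this.congr_fun ?_ measurableSet_Ioi
    intro x _; ring
  have hf : IntegrableOn (fun r : ℝ => r * Real.exp (-r ^ 2 / 2) * Real.cos (b * r))
      (Set.Ioi 0) := by
    apply Integrable.mono' (integrableOn_poly_gauss 1)
    · apply Continuous.aestronglyMeasurable
      continuity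
    · filter_upwards [ae_restrict_mem measurableSet_Ioi] with x hx
      have hx0 : (0:ℝ) ≤ x := le_of_lt hx
      rw [Real.norm_eq_abs, abs_mul, abs_mul, abs_of_nonneg hx0,
        abs_of_nonneg (Real.exp_pos _).le, pow_one]
      calc x * Real.exp (-x ^ 2 / 2) * |Real.cos (b * x)|
          ≤ x * Real.exp (-x ^ 2 / 2) * 1 := by
            apply mul_le_mul_of_nonneg_left (Real.abs_cos_le_one _) (by positivity)
        _ = x * Real.exp (-x ^ 2 / 2) := by ring
  have hmono : ∫ r in Set.Ioi (0:ℝ), r * Real.exp (-r ^ 2 / 2) *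
      (1 - (b*r) ^ 2 / 2 + (b*r) ^ 4 / 24 - (b*r) ^ 6 / 720)
      ≤ ∫ r in Set.Ioi (0:ℝ), r * Real.exp (-r ^ 2 / 2) * Real.cos (b * r) := by
    apply MeasureTheory.setIntegral_mono_on hg hf measurableSet_Ioi
    intro x hx
    have hx0 : (0:ℝ) ≤ x := le_of_lt hx
    exact mul_le_mul_of_nonneg_left (cos_ge_sextic (b * x)) (by positivity)
  rw [gauss_poly_integral b] at hmono
  nlinarith [sq_nonneg b, sq_nonneg (1 - b ^ 2), sq_nonneg (b ^ 2),
    mul_nonneg (sub_nonneg.mpr hb2) (sq_nonneg b),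
    mul_nonneg (mul_nonneg (sub_nonneg.mpr hb2) (sq_nonneg b)) (sq_nonneg b)]
end

section
/- Let σ be a nonzero real number and λ > 1 a real number. Then f_σ(λ) = ∫₀^{2π} [1 − cos(σ·log(λ cos²θ + λ^{−1} sin²θ))] dθ is strictly positive. -/
open Real

/-- For nonzero real `σ` and real `l > 1`,
`f_σ(l) = ∫₀^{2π} [1 − cos(σ·log(l cos²θ + l⁻¹ sin²θ))] dθ` is strictly positive. -/
theorem stmt_4 (σ : ℝ) (hσ : σ ≠ 0) (l : ℝ) (hl : 1 < l) :
    0 < ∫ θ in (0 : ℝ)..(2 * π),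
      (1 - Real.cos (σ * Real.log (l * Real.cos θ ^ 2 + l⁻¹ * Real.sin θ ^ 2))) := by
  set g : ℝ → ℝ := fun θ => l * Real.cos θ ^ 2 + l⁻¹ * Real.sin θ ^ 2 with hgdef
  set f : ℝ → ℝ := fun θ => 1 - Real.cos (σ * Real.log (g θ)) with hfdef
  have hl0 : (0:ℝ) < l := lt_trans one_pos hl
  have hli : (0:ℝ) < l⁻¹ := inv_pos.mpr hl0
  have hgpos : ∀ θ, 0 < g θ := by
    intro θ
    simp only [hgdef]
    have h3 : Real.sin θ ^ 2 + Real.cos θ ^ 2 = 1 := Real.sin_sq_add_cos_sq θ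
    have h4 : 0 ≤ Real.cos θ ^ 2 := sq_nonneg _
    have h5 : 0 ≤ Real.sin θ ^ 2 := sq_nonneg _
    have hle : l⁻¹ ≤ l := le_trans (inv_lt_one_of_one_lt₀ hl).le hl.le
    nlinarith [mul_nonneg (sub_nonneg.mpr hle) h4,
      mul_pos hli (show (0:ℝ) < Real.sin θ^2 + Real.cos θ^2 by nlinarith)]
  have hgc : Continuous g := by fun_prop
  have hfc : Continuous f := by
    apply Continuous.sub continuous_const
    exact Real.continuous_cos.comp ((continuous_const.mul (hgc.log fun θ => (hgpos θ).ne')))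
  have hfnonneg : ∀ θ, 0 ≤ f θ := fun θ => sub_nonneg.mpr (Real.cos_le_one _)
  have hlogl : 0 < Real.log l := Real.log_pos hl
  set t : ℝ := min (|σ| * Real.log l) π with htdef
  have ht0 : 0 < t := lt_min (mul_pos (abs_pos.mpr hσ) hlogl) Real.pi_pos
  have hg0 : g 0 = l := by simp [hgdef]
  have hgpi2 : g (π/2) = l⁻¹ := by simp [hgdef]
  have hc : ContinuousOn (fun θ => σ * Real.log (g θ)) (Set.uIcc 0 (π/2)) :=
    ((continuous_const.mul (hgc.log fun θ => (hgpos θ).ne'))).continuousOn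
  have h1 : t ≤ |σ| * Real.log l := min_le_left _ _
  have hmem : t ∈ Set.uIcc (σ * Real.log (g 0)) (σ * Real.log (g (π/2))) := by
    rw [hg0, hgpi2, Real.log_inv]
    rcases le_or_gt 0 σ with hs | hs
    · have h2 : |σ| * Real.log l = σ * Real.log l := by rw [abs_of_nonneg hs]
      rw [Set.uIcc_of_ge (by nlinarith)]
      exact ⟨by nlinarith, by linarith⟩
    · have h2 : |σ| * Real.log l = σ * -Real.log l := by rw [abs_of_neg hs]; ring
      rw [Set.uIcc_of_le (by nlinarith)]
      exact ⟨by nlinarith, by linarith⟩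
  obtain ⟨θ₀, hθ₀mem, hθ₀⟩ := intermediate_value_uIcc hc hmem
  have hθ₀Icc : θ₀ ∈ Set.Icc (0:ℝ) (π/2) := by
    rwa [Set.uIcc_of_le (by positivity)] at hθ₀mem
  have hft : 0 < f θ₀ := by
    have hcos : Real.cos t < 1 := by
      have := Real.cos_lt_cos_of_nonneg_of_le_pi (le_refl 0) (min_le_right (|σ| * Real.log l) π) ht0
      simpa using this
    simp only [hfdef, hθ₀]
    linarith
  have hev : ∀ᶠ θ in nhds θ₀, 0 < f θ := (hfc.continuousAt).eventually (eventually_gt_nhds hft)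
  obtain ⟨ε, hε, hball⟩ := Metric.eventually_nhds_iff.mp hev
  set b : ℝ := θ₀ + min ε 1 with hbdef
  have hθ₀b : θ₀ < b := by
    have : 0 < min ε 1 := lt_min hε one_pos
    simp [hbdef]; linarith
  have hb2π : b ≤ 2 * π := by
    have hπ : 3 < π := Real.pi_gt_three
    have h1 : θ₀ ≤ π / 2 := hθ₀Icc.2
    have h2 : min ε 1 ≤ 1 := min_le_right _ _
    simp only [hbdef]; linarith
  have hint : ∀ u v : ℝ, IntervalIntegrable f MeasureTheory.volume u v :=
    fun u v => hfc.intervalIntegrable u v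
  have hsplit : (∫ θ in (0:ℝ)..(2*π), f θ) =
      (∫ θ in (0:ℝ)..θ₀, f θ) + (∫ θ in θ₀..b, f θ) + (∫ θ in b..(2*π), f θ) := by
    rw [intervalIntegral.integral_add_adjacent_intervals (hint 0 θ₀) (hint θ₀ b),
      intervalIntegral.integral_add_adjacent_intervals (hint 0 b) (hint b (2*π))]
  have hI1 : 0 ≤ ∫ θ in (0:ℝ)..θ₀, f θ :=
    intervalIntegral.integral_nonneg hθ₀Icc.1 (fun u _ => hfnonneg u)
  have hI3 : 0 ≤ ∫ θ in b..(2*π), f θ :=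
    intervalIntegral.integral_nonneg hb2π (fun u _ => hfnonneg u)
  have hI2 : 0 < ∫ θ in θ₀..b, f θ := by
    apply intervalIntegral.intervalIntegral_pos_of_pos_on (hint θ₀ b) _ hθ₀b
    intro x hx
    apply hball
    rw [Real.dist_eq, abs_of_pos (by linarith [hx.1])]
    have := hx.2
    simp only [hbdef] at this
    have : x - θ₀ < min ε 1 := by linarith
    exact lt_of_lt_of_le this (min_le_left _ _)
  calc 0 < (∫ θ in (0:ℝ)..θ₀, f θ) + (∫ θ in θ₀..b, f θ) + (∫ θ in b..(2*π), f θ) := by linarith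
    _ = _ := hsplit.symm
end

section
/- Let σ be a real number. Then lim_{δ→0⁺} f_σ(1+δ)/δ² = πσ²/2, where f_σ(λ) = ∫₀^{2π} [1 − cos(σ log(λ cos²θ + λ^{−1} sin²θ))] dθ. -/
open Real Filter

private lemma A_bounds {δ : ℝ} (hδ : 0 < δ) (θ : ℝ) :
    (1 + δ)⁻¹ ≤ (1 + δ) * Real.cos θ ^ 2 + (1 + δ)⁻¹ * Real.sin θ ^ 2 ∧
      (1 + δ) * Real.cos θ ^ 2 + (1 + δ)⁻¹ * Real.sin θ ^ 2 ≤ 1 + δ := by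
  have h1 : (0 : ℝ) < 1 + δ := by linarith
  have hinv : (0 : ℝ) < (1 + δ)⁻¹ := inv_pos.2 h1
  have hinv1 : (1 + δ)⁻¹ ≤ 1 + δ := by
    have : (1 + δ)⁻¹ ≤ 1 := inv_le_one_of_one_le₀ (by linarith)
    linarith
  have hp := Real.sin_sq_add_cos_sq θ
  constructor
  · nlinarith [sq_nonneg (Real.cos θ)]
  · nlinarith [sq_nonneg (Real.sin θ)]

private lemma A_pos {δ : ℝ} (hδ : 0 < δ) (θ : ℝ) :
    0 < (1 + δ) * Real.cos θ ^ 2 + (1 + δ)⁻¹ * Real.sin θ ^ 2 := by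
  have h1 : (0 : ℝ) < 1 + δ := by linarith
  exact lt_of_lt_of_le (inv_pos.2 h1) (A_bounds hδ θ).1

private lemma log_A_bound {δ : ℝ} (hδ : 0 < δ) (θ : ℝ) :
    |Real.log ((1 + δ) * Real.cos θ ^ 2 + (1 + δ)⁻¹ * Real.sin θ ^ 2)| ≤ δ := by
  have h1 : (0 : ℝ) < 1 + δ := by linarith
  have hb := A_bounds hδ θ
  have hApos := A_pos hδ θ
  have hlog1 : Real.log (1 + δ) ≤ δ := by
    have := Real.log_le_sub_one_of_pos h1
    linarith
  have hup : Real.log ((1 + δ) * Real.cos θ ^ 2 + (1 + δ)⁻¹ * Real.sin θ ^ 2)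
      ≤ Real.log (1 + δ) := Real.log_le_log hApos hb.2
  have hlo : Real.log ((1 + δ)⁻¹) ≤
      Real.log ((1 + δ) * Real.cos θ ^ 2 + (1 + δ)⁻¹ * Real.sin θ ^ 2) :=
    Real.log_le_log (inv_pos.2 h1) hb.1
  rw [Real.log_inv] at hlo
  rw [abs_le]
  constructor <;> linarith

private lemma ptwise (σ θ : ℝ) :
    Tendsto
      (fun δ : ℝ =>
        (1 - Real.cos (σ * Real.log ((1 + δ) * Real.cos θ ^ 2 + (1 + δ)⁻¹ * Real.sin θ ^ 2)))
          / δ ^ 2)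
      (nhdsWithin 0 (Set.Ioi 0))
      (nhds (σ ^ 2 * (Real.cos θ ^ 2 - Real.sin θ ^ 2) ^ 2 / 2)) := by
  set h : ℝ → ℝ :=
    fun δ => Real.log ((1 + δ) * Real.cos θ ^ 2 + (1 + δ)⁻¹ * Real.sin θ ^ 2) with hh
  have hA : HasDerivAt (fun δ : ℝ => (1 + δ) * Real.cos θ ^ 2 + (1 + δ)⁻¹ * Real.sin θ ^ 2)
      (Real.cos θ ^ 2 - Real.sin θ ^ 2) 0 := by
    have h1 : HasDerivAt (fun δ : ℝ => 1 + δ) 1 0 := by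
      simpa using (hasDerivAt_id (0 : ℝ)).const_add 1
    have h2 := h1.mul_const (Real.cos θ ^ 2)
    have h3 := (h1.inv (by norm_num)).mul_const (Real.sin θ ^ 2)
    refine (h2.add h3).congr_deriv ?_
    norm_num
    ring
  have hA0 : (1 + (0 : ℝ)) * Real.cos θ ^ 2 + (1 + (0 : ℝ))⁻¹ * Real.sin θ ^ 2 = 1 := by
    have := Real.sin_sq_add_cos_sq θ
    norm_num
  have hlog : HasDerivAt h (Real.cos θ ^ 2 - Real.sin θ ^ 2) 0 := by
    have := hA.log (by rw [hA0]; norm_num)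
    simpa [hA0] using this
  have h0 : h 0 = 0 := by
    rw [hh]
    simp only [hA0]
    exact Real.log_one
  have hslope : Tendsto (fun δ => h δ / δ) (nhdsWithin 0 (Set.Ioi 0))
      (nhds (Real.cos θ ^ 2 - Real.sin θ ^ 2)) := by
    have h1 := hasDerivAt_iff_tendsto_slope.mp hlog
    have h2 := h1.mono_left
      (nhdsWithin_mono _ (fun x hx => (ne_of_gt hx : x ≠ 0) : Set.Ioi (0 : ℝ) ⊆ {(0 : ℝ)}ᶜ))
    refine h2.congr' ?_
    filter_upwards [self_mem_nhdsWithin] with x hx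
    rw [slope_def_field, h0]
    simp
  have hmain : Tendsto (fun δ : ℝ => σ ^ 2 * (h δ / δ) ^ 2 / 2) (nhdsWithin 0 (Set.Ioi 0))
      (nhds (σ ^ 2 * (Real.cos θ ^ 2 - Real.sin θ ^ 2) ^ 2 / 2)) :=
    ((hslope.pow 2).const_mul _).div_const 2
  have herr : Tendsto
      (fun δ : ℝ => (1 - Real.cos (σ * h δ)) / δ ^ 2 - σ ^ 2 * (h δ / δ) ^ 2 / 2)
      (nhdsWithin 0 (Set.Ioi 0)) (nhds 0) := by
    have hg : Tendsto (fun δ : ℝ => 5 / 96 * σ ^ 4 * δ ^ 2) (nhdsWithin 0 (Set.Ioi 0))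
        (nhds 0) := by
      have hc : Tendsto (fun δ : ℝ => 5 / 96 * σ ^ 4 * δ ^ 2) (nhds 0)
          (nhds (5 / 96 * σ ^ 4 * (0 : ℝ) ^ 2)) := Continuous.tendsto (by continuity) 0
      have hz : 5 / 96 * σ ^ 4 * (0 : ℝ) ^ 2 = 0 := by norm_num
      rw [hz] at hc
      exact hc.mono_left nhdsWithin_le_nhds
    refine squeeze_zero_norm' ?_ hg
    · have hpos : (0 : ℝ) < 1 / (1 + |σ|) := by positivity
      filter_upwards [Ioo_mem_nhdsGT hpos] with δ hδ
      obtain ⟨hδ0, hδ1⟩ := hδ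
      have hδ2 : (0 : ℝ) < δ ^ 2 := by positivity
      have hhb : |h δ| ≤ δ := log_A_bound hδ0 θ
      have hσδ : |σ| * δ ≤ 1 := by
        have h1 : (0 : ℝ) < 1 + |σ| := by positivity
        rw [lt_div_iff₀ h1] at hδ1
        nlinarith [abs_nonneg σ, hδ0.le]
      have hx : |σ * h δ| ≤ 1 := by
        rw [abs_mul]
        calc |σ| * |h δ| ≤ |σ| * δ := by
              exact mul_le_mul_of_nonneg_left hhb (abs_nonneg σ)
          _ ≤ 1 := hσδ
      have hcb := Real.cos_bound hx
      have heq : (1 - Real.cos (σ * h δ)) / δ ^ 2 - σ ^ 2 * (h δ / δ) ^ 2 / 2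
          = -(Real.cos (σ * h δ) - (1 - (σ * h δ) ^ 2 / 2)) / δ ^ 2 := by
        field_simp
        ring
      rw [heq, Real.norm_eq_abs, abs_div, abs_neg, abs_of_pos hδ2]
      have hb2 : |σ * h δ| ^ 4 ≤ σ ^ 4 * δ ^ 4 := by
        have h1 : |σ * h δ| ≤ |σ| * δ := by
          rw [abs_mul]; exact mul_le_mul_of_nonneg_left hhb (abs_nonneg σ)
        have h2 : |σ * h δ| ^ 4 ≤ (|σ| * δ) ^ 4 :=
          pow_le_pow_left₀ (abs_nonneg _) h1 4
        have h3 : (|σ| * δ) ^ 4 = σ ^ 4 * δ ^ 4 := by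
          rw [mul_pow, ← abs_pow, abs_of_nonneg (by positivity : (0:ℝ) ≤ σ ^ 4)]
        linarith
      calc |Real.cos (σ * h δ) - (1 - (σ * h δ) ^ 2 / 2)| / δ ^ 2
          ≤ (|σ * h δ| ^ 4 * (5 / 96)) / δ ^ 2 := by gcongr
        _ ≤ (σ ^ 4 * δ ^ 4 * (5 / 96)) / δ ^ 2 := by gcongr
        _ = 5 / 96 * σ ^ 4 * δ ^ 2 := by field_simp
  have hsum := hmain.add herr
  rw [add_zero] at hsum
  refine hsum.congr fun δ => ?_
  ring

/-- With `f_σ(l) = ∫₀^{2π} [1 − cos(σ log(l cos²θ + l⁻¹ sin²θ))] dθ`,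
for every real `σ`, `lim_{δ→0⁺} f_σ(1+δ)/δ² = πσ²/2`. -/
theorem stmt_5 (σ : ℝ) :
    Tendsto
      (fun δ : ℝ =>
        (∫ θ in (0 : ℝ)..(2 * π),
          (1 - Real.cos (σ * Real.log ((1 + δ) * Real.cos θ ^ 2 + (1 + δ)⁻¹ * Real.sin θ ^ 2))))
        / δ ^ 2)
      (nhdsWithin 0 (Set.Ioi 0)) (nhds (π * σ ^ 2 / 2)) := by
  have hIval : (∫ θ in (0 : ℝ)..(2 * π),
      σ ^ 2 * (Real.cos θ ^ 2 - Real.sin θ ^ 2) ^ 2 / 2) = π * σ ^ 2 / 2 := by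
    have hderiv : ∀ t : ℝ, HasDerivAt (fun t : ℝ => t / 2 + Real.sin (4 * t) / 8)
        ((Real.cos t ^ 2 - Real.sin t ^ 2) ^ 2) t := by
      intro t
      have h4 : HasDerivAt (fun u : ℝ => 4 * u) 4 t := by
        simpa using (hasDerivAt_id t).const_mul 4
      have hs : HasDerivAt (fun u : ℝ => Real.sin (4 * u)) (Real.cos (4 * t) * 4) t :=
        (Real.hasDerivAt_sin (4 * t)).comp t h4
      have := ((hasDerivAt_id t).div_const 2).add (hs.div_const 8)
      refine this.congr_deriv ?_
      have e1 : Real.cos t ^ 2 - Real.sin t ^ 2 = Real.cos (2 * t) := by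
        rw [Real.cos_two_mul, Real.sin_sq]; ring
      have e2 : Real.cos (2 * t) ^ 2 = 1 / 2 + Real.cos (2 * (2 * t)) / 2 := Real.cos_sq (2 * t)
      rw [e1, e2, show (2 : ℝ) * (2 * t) = 4 * t by ring]
      ring
    have hint : (∫ θ in (0 : ℝ)..(2 * π), (Real.cos θ ^ 2 - Real.sin θ ^ 2) ^ 2) = π := by
      rw [intervalIntegral.integral_eq_sub_of_hasDerivAt (fun t _ => hderiv t)
        ((((Real.continuous_cos.pow 2).sub (Real.continuous_sin.pow 2)).pow 2).intervalIntegrable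
          _ _)]
      have hsin : Real.sin (4 * (2 * π)) = 0 := by
        rw [show (4 : ℝ) * (2 * π) = (8 : ℤ) * π by push_cast; ring]
        exact Real.sin_int_mul_pi 8
      rw [hsin]
      norm_num
    have : (∫ θ in (0 : ℝ)..(2 * π), σ ^ 2 * (Real.cos θ ^ 2 - Real.sin θ ^ 2) ^ 2 / 2)
        = σ ^ 2 / 2 * ∫ θ in (0 : ℝ)..(2 * π), (Real.cos θ ^ 2 - Real.sin θ ^ 2) ^ 2 := by
      rw [← intervalIntegral.integral_const_mul]
      congr 1
      funext t
      ring
    rw [this, hint]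
    ring
  rw [← hIval]
  have hmem : Set.Ioo (0 : ℝ) (1 / (1 + |σ|)) ∈ nhdsWithin (0 : ℝ) (Set.Ioi 0) :=
    Ioo_mem_nhdsGT (by positivity)
  have key := intervalIntegral.tendsto_integral_filter_of_dominated_convergence
    (μ := MeasureTheory.volume) (a := (0 : ℝ)) (b := 2 * π)
    (F := fun δ θ =>
      (1 - Real.cos (σ * Real.log ((1 + δ) * Real.cos θ ^ 2 + (1 + δ)⁻¹ * Real.sin θ ^ 2)))
        / δ ^ 2)
    (f := fun θ => σ ^ 2 * (Real.cos θ ^ 2 - Real.sin θ ^ 2) ^ 2 / 2)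
    (l := nhdsWithin 0 (Set.Ioi 0))
    (bound := fun _ => σ ^ 2)
    ?meas ?bnd ?bint ?lim
  · refine key.congr fun δ => ?_
    simp only [intervalIntegral.integral_div]
  case meas =>
    filter_upwards [self_mem_nhdsWithin] with δ (hδ : (0 : ℝ) < δ)
    have hcont : Continuous (fun θ : ℝ =>
        (1 - Real.cos (σ * Real.log ((1 + δ) * Real.cos θ ^ 2 + (1 + δ)⁻¹ * Real.sin θ ^ 2)))
          / δ ^ 2) := by
      apply Continuous.div_const
      apply continuous_const.sub
      apply Real.continuous_cos.comp
      apply continuous_const.mul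
      rw [continuous_iff_continuousAt]
      intro θ
      exact ContinuousAt.log (by fun_prop) (ne_of_gt (A_pos hδ θ))
    exact hcont.aestronglyMeasurable
  case bnd =>
    filter_upwards [hmem] with δ hδ
    obtain ⟨hδ0, hδ1⟩ := hδ
    refine MeasureTheory.ae_of_all _ fun θ _ => ?_
    have hδ2 : (0 : ℝ) < δ ^ 2 := by positivity
    have hhb := log_A_bound hδ0 θ
    have hσδ : |σ| * δ ≤ 1 := by
      have h1 : (0 : ℝ) < 1 + |σ| := by positivity
      rw [lt_div_iff₀ h1] at hδ1
      nlinarith [abs_nonneg σ, hδ0.le]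
    rw [Real.norm_eq_abs, abs_div, abs_of_pos hδ2, div_le_iff₀ hδ2]
    have hxb : |σ * Real.log ((1 + δ) * Real.cos θ ^ 2 + (1 + δ)⁻¹ * Real.sin θ ^ 2)|
        ≤ |σ| * δ := by
      rw [abs_mul]
      exact mul_le_mul_of_nonneg_left hhb (abs_nonneg σ)
    generalize hgen : σ * Real.log ((1 + δ) * Real.cos θ ^ 2 + (1 + δ)⁻¹ * Real.sin θ ^ 2) = x
      at hxb ⊢
    have hx1 : |x| ≤ 1 := le_trans hxb hσδ
    have hcb := Real.cos_bound hx1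
    have h2 := abs_le.mp hcb
    have hxsq : x ^ 2 ≤ σ ^ 2 * δ ^ 2 := by
      have := pow_le_pow_left₀ (abs_nonneg x) hxb 2
      rwa [sq_abs, mul_pow, sq_abs] at this
    have hx21 : x ^ 2 ≤ 1 := by
      have := pow_le_pow_left₀ (abs_nonneg x) hx1 2
      rwa [sq_abs, one_pow] at this
    have he : |x| ^ 4 = (x ^ 2) ^ 2 := by
      rw [show (4 : ℕ) = 2 * 2 from rfl, pow_mul, sq_abs]
    have hx4 : |x| ^ 4 ≤ x ^ 2 := by
      rw [he]
      nlinarith [sq_nonneg x, hx21]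
    rw [abs_le]
    constructor <;>
      linarith [h2.1, h2.2, hx4, hxsq, sq_nonneg x,
        mul_nonneg (sq_nonneg σ) (sq_nonneg δ), pow_nonneg (abs_nonneg x) 4]
  case bint =>
    exact intervalIntegrable_const
  case lim =>
    exact MeasureTheory.ae_of_all _ fun θ _ => ptwise σ θ
end

section
/- Let Ω₁, Ω₂ ⊆ ℂ be open sets and s ∈ ℂ. Let ψ: ℂ → ℂ be real-differentiable on Ω₁ with ψ(Ω₁) ⊆ Ω₂ and with Jacobian determinant J(x) = det(Dψ(x)) > 0 for all x ∈ Ω₁. Let γ₁ be holomorphic on Ω₁ with γ₁(Ω₁) ⊆ Ω₁ and γ₁'(x) ≠ 0 on Ω₁, and let γ₂ be holomorphic on Ω₂ with γ₂(Ω₂) ⊆ Ω₂ and γ₂'(w) ≠ 0 on Ω₂, such that ψ∘γ₁ = γ₂∘ψ on Ω₁. If f: Ω₂ → ℂ satisfies f(γ₂(w))·|γ₂'(w)|^s = f(w) for all w ∈ Ω₂, then the function g(x) = (J(x))^{s/2}·f(ψ(x)) satisfies g(γ₁(x))·|γ₁'(x)|^s = g(x) for all x ∈ Ω₁. -/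
open Set

lemma det_of_complex_linear (c : ℂ) (L : ℂ →ₗ[ℝ] ℂ) (hL : ∀ z, L z = c * z) :
    LinearMap.det L = Complex.normSq c := by
  have : L = Algebra.lmul ℝ ℂ c := by
    ext z
    simp [hL]
  rw [this, ← Algebra.norm_apply, Algebra.norm_complex_apply]

/-- Pullback of automorphic forms: if `ψ` is a real-differentiable map with positive
Jacobian determinant `J` on `Ω₁` conjugating the holomorphic map `γ₁` on `Ω₁` to the
holomorphic map `γ₂` on `Ω₂`, and `f` has weight `s` with respect to `γ₂`, then
`g(x) = J(x)^{s/2}·f(ψ(x))` has weight `s` with respect to `γ₁`.  Here the complex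
power `t^w` of a positive real `t` is `exp(w·log t)`. -/
theorem stmt_8 (Ω₁ Ω₂ : Set ℂ) (hΩ₁ : IsOpen Ω₁) (hΩ₂ : IsOpen Ω₂) (s : ℂ)
    (ψ : ℂ → ℂ) (hψdiff : ∀ x ∈ Ω₁, DifferentiableAt ℝ ψ x)
    (hψmaps : MapsTo ψ Ω₁ Ω₂)
    (J : ℂ → ℝ) (hJ : ∀ x ∈ Ω₁, J x = LinearMap.det ((fderiv ℝ ψ x : ℂ →L[ℝ] ℂ) : ℂ →ₗ[ℝ] ℂ))
    (hJpos : ∀ x ∈ Ω₁, 0 < J x)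
    (γ₁ : ℂ → ℂ) (hγ₁ : ∀ x ∈ Ω₁, DifferentiableAt ℂ γ₁ x)
    (hγ₁maps : MapsTo γ₁ Ω₁ Ω₁) (hγ₁' : ∀ x ∈ Ω₁, deriv γ₁ x ≠ 0)
    (γ₂ : ℂ → ℂ) (hγ₂ : ∀ w ∈ Ω₂, DifferentiableAt ℂ γ₂ w)
    (hγ₂maps : MapsTo γ₂ Ω₂ Ω₂) (hγ₂' : ∀ w ∈ Ω₂, deriv γ₂ w ≠ 0)
    (hconj : ∀ x ∈ Ω₁, ψ (γ₁ x) = γ₂ (ψ x))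
    (f : ℂ → ℂ)
    (hf : ∀ w ∈ Ω₂, f (γ₂ w) * Complex.exp (s * Real.log ‖deriv γ₂ w‖) = f w)
    (g : ℂ → ℂ)
    (hg : ∀ x ∈ Ω₁, g x = Complex.exp ((s / 2) * Real.log (J x)) * f (ψ x)) :
    ∀ x ∈ Ω₁, g (γ₁ x) * Complex.exp (s * Real.log ‖deriv γ₁ x‖) = g x := by
  intro x hx
  have hx1 : γ₁ x ∈ Ω₁ := hγ₁maps hx
  have hw : ψ x ∈ Ω₂ := hψmaps hx
  have hw2 : γ₂ (ψ x) ∈ Ω₂ := hγ₂maps hw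
  -- differentiabilities
  have hγ₁R : DifferentiableAt ℝ γ₁ x := (hγ₁ x hx).restrictScalars ℝ
  have hγ₂R : DifferentiableAt ℝ γ₂ (ψ x) := (hγ₂ _ hw).restrictScalars ℝ
  -- chain rule on the conjugacy
  have hev : ψ ∘ γ₁ =ᶠ[nhds x] γ₂ ∘ ψ := by
    filter_upwards [hΩ₁.mem_nhds hx] with y hy
    exact hconj y hy
  have hchain :
      (fderiv ℝ ψ (γ₁ x)).comp (fderiv ℝ γ₁ x)
        = (fderiv ℝ γ₂ (ψ x)).comp (fderiv ℝ ψ x) := by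
    have h1 : fderiv ℝ (ψ ∘ γ₁) x = (fderiv ℝ ψ (γ₁ x)).comp (fderiv ℝ γ₁ x) :=
      fderiv_comp x (hψdiff _ hx1) hγ₁R
    have h2 : fderiv ℝ (γ₂ ∘ ψ) x = (fderiv ℝ γ₂ (ψ x)).comp (fderiv ℝ ψ x) :=
      fderiv_comp x hγ₂R (hψdiff x hx)
    rw [← h1, ← h2, hev.fderiv_eq]
  -- determinants of the holomorphic derivatives
  have hdet1 : LinearMap.det ((fderiv ℝ γ₁ x : ℂ →L[ℝ] ℂ) : ℂ →ₗ[ℝ] ℂ)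
      = Complex.normSq (deriv γ₁ x) := by
    apply det_of_complex_linear
    intro z
    have hd1 : fderiv ℝ γ₁ x
        = ((ContinuousLinearMap.smulRight (1 : ℂ →L[ℂ] ℂ) (deriv γ₁ x)).restrictScalars ℝ) :=
      ((hγ₁ x hx).hasDerivAt.hasFDerivAt.restrictScalars ℝ).fderiv
    rw [hd1]
    simp [mul_comm]
  have hdet2 : LinearMap.det ((fderiv ℝ γ₂ (ψ x) : ℂ →L[ℝ] ℂ) : ℂ →ₗ[ℝ] ℂ)
      = Complex.normSq (deriv γ₂ (ψ x)) := by
    apply det_of_complex_linear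
    intro z
    have hd2 : fderiv ℝ γ₂ (ψ x)
        = ((ContinuousLinearMap.smulRight (1 : ℂ →L[ℂ] ℂ) (deriv γ₂ (ψ x))).restrictScalars ℝ) :=
      ((hγ₂ _ hw).hasDerivAt.hasFDerivAt.restrictScalars ℝ).fderiv
    rw [hd2]
    simp [mul_comm]
  -- determinant identity
  have hdeteq : J (γ₁ x) * Complex.normSq (deriv γ₁ x)
      = Complex.normSq (deriv γ₂ (ψ x)) * J x := by
    have := congrArg (fun L : ℂ →L[ℝ] ℂ => LinearMap.det (L : ℂ →ₗ[ℝ] ℂ)) hchain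
    simp only [ContinuousLinearMap.toLinearMap_comp, LinearMap.det_comp] at this
    rw [hJ _ hx1, hJ _ hx, hdet1, hdet2] at *
    linarith [this]
  -- log identity
  have habs1 : (0:ℝ) < ‖deriv γ₁ x‖ :=
    norm_pos_iff.mpr (hγ₁' x hx)
  have habs2 : (0:ℝ) < ‖deriv γ₂ (ψ x)‖ :=
    norm_pos_iff.mpr (hγ₂' _ hw)
  have hns1 : Complex.normSq (deriv γ₁ x) = ‖deriv γ₁ x‖ ^ 2 :=
    (Complex.sq_norm _).symm
  have hns2 : Complex.normSq (deriv γ₂ (ψ x)) = ‖deriv γ₂ (ψ x)‖ ^ 2 :=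
    (Complex.sq_norm _).symm
  have hlog : Real.log (J (γ₁ x)) + 2 * Real.log (‖deriv γ₁ x‖)
      = 2 * Real.log (‖deriv γ₂ (ψ x)‖) + Real.log (J x) := by
    have := congrArg Real.log hdeteq
    rw [Real.log_mul (hJpos _ hx1).ne' (Complex.normSq_pos.mpr (hγ₁' x hx)).ne', Real.log_mul (Complex.normSq_pos.mpr (hγ₂' _ hw)).ne'
      (hJpos _ hx).ne', hns1, hns2, Real.log_pow, Real.log_pow] at this
    push_cast at this
    linarith
  -- combine
  rw [hg _ hx1, hg _ hx, hconj x hx]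
  rw [mul_assoc, mul_comm (f (γ₂ (ψ x))), ← mul_assoc, ← Complex.exp_add]
  have hexp : (s / 2) * (Real.log (J (γ₁ x)) : ℂ) + s * Real.log (‖deriv γ₁ x‖)
      = (s / 2) * Real.log (J x) + s * Real.log (‖deriv γ₂ (ψ x)‖) := by
    have : ((Real.log (J (γ₁ x)) + 2 * Real.log (‖deriv γ₁ x‖) : ℝ) : ℂ)
        = ((2 * Real.log (‖deriv γ₂ (ψ x)‖) + Real.log (J x) : ℝ) : ℂ) := by
      exact_mod_cast congrArg (fun r : ℝ => (r:ℂ)) hlog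
    push_cast at this
    linear_combination (s / 2) * this
  rw [hexp, Complex.exp_add, mul_assoc, mul_comm (Complex.exp (s * _)), hf _ hw]
end
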